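/- For every real number \(q > 1\), every real number \(y > 0\), and every natural number a, define for each integer \(e \ge -a-2\) the term \(f(e) = \frac{1}{q}\big(q^{\min(a+e+1,0)} - 2q^{\min(a+e+2,0)-1} + q^{\min(a+e+3,0)-2}\big)\, q^{2\min(e+1,0)}\, y^{\min(e,0)}\, \frac{q^{1-2e}}{q-1}\). Then the series \(\sum_{e=0}^{\infty} f(e)\) converges and \(f(-a-2) + \sum_{e=-a-1}^{-1} f(e) + \sum_{e=0}^{\infty} f(e) = -y^{-a-2} + (q-1)\sum_{e=-a-1}^{-1} y^{e} + \frac{1}{q+1}\). -/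

import Mathlib

/-- Evaluation of the contribution of the anti-diagonal orbit representatives in the
proof of the third local density formula of Theorem 6.2, with `y = q^{2r}`. -/
theorem antidiagonal_contribution_third {q y : ℝ} (hq : 1 < q) (hy : 0 < y) (a : ℕ)
    (f : ℤ → ℝ)
    (hf : ∀ e : ℤ, -(a : ℤ) - 2 ≤ e →
      f e = (1 / q) * (q ^ (min ((a : ℤ) + e + 1) 0) - 2 * q ^ (min ((a : ℤ) + e + 2) 0 - 1)
            + q ^ (min ((a : ℤ) + e + 3) 0 - 2))
          * q ^ (2 * min (e + 1) 0) * y ^ (min e 0) * (q ^ (1 - 2 * e) / (q - 1))) :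
    (Summable fun e : ℕ => f (e : ℤ)) ∧
    f (-(a : ℤ) - 2) + (∑ e ∈ Finset.Icc (-(a : ℤ) - 1) (-1), f e)
        + ∑' e : ℕ, f (e : ℤ) =
      -y ^ (-(a : ℤ) - 2) + (q - 1) * (∑ e ∈ Finset.Icc (-(a : ℤ) - 1) (-1), y ^ e)
        + 1 / (q + 1) := by
  have hq0 : 0 < q := lt_trans one_pos hq
  have hqne : q ≠ 0 := ne_of_gt hq0
  have hq1 : q - 1 ≠ 0 := sub_ne_zero.mpr hq.ne'
  have hyne : y ≠ 0 := ne_of_gt hy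
  have em1 : q ^ ((0:ℤ) - 1) = 1 / q := by
    rw [zpow_sub₀ hqne, zpow_zero, zpow_one]
  have em2 : q ^ ((0:ℤ) - 2) = 1 / (q * q) := by
    rw [zpow_sub₀ hqne, zpow_zero, zpow_two]
  have en1 : q ^ (-1 : ℤ) = 1 / q := by
    rw [zpow_neg_one, one_div]
  -- value on naturals
  have hnat : ∀ n : ℕ, f (n : ℤ) = ((q - 1) / q ^ 2) * ((q ^ 2)⁻¹) ^ n := by
    intro n
    rw [hf (n : ℤ) (by omega)]
    rw [min_eq_right (by positivity : (0:ℤ) ≤ (a : ℤ) + n + 1),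
        min_eq_right (by positivity : (0:ℤ) ≤ (a : ℤ) + n + 2),
        min_eq_right (by positivity : (0:ℤ) ≤ (a : ℤ) + n + 3),
        min_eq_right (by positivity : (0:ℤ) ≤ (n : ℤ) + 1),
        min_eq_right (by positivity : (0:ℤ) ≤ (n : ℤ))]
    have hpow : q ^ ((1:ℤ) - 2 * (n : ℤ)) = q * ((q ^ 2) ^ n)⁻¹ := by
      rw [show (1:ℤ) - 2 * (n : ℤ) = 1 + -(((2 * n : ℕ) : ℤ)) by push_cast; ring,
          zpow_add₀ hqne, zpow_one, zpow_neg, zpow_natCast, pow_mul]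
    rw [hpow, em1, em2, zpow_zero, zpow_zero, mul_zero, zpow_zero]
    have hP : ((q ^ 2) ^ n : ℝ) ≠ 0 := by positivity
    field_simp
    have hinv : q ^ (n * 2) * q⁻¹ ^ (n * 2) = 1 := by
      rw [← mul_pow, mul_inv_cancel₀ hqne, one_pow]
    linear_combination (-(1 - 2 * q + q ^ 2)) * hinv
  have hr0 : (0:ℝ) ≤ (q ^ 2)⁻¹ := by positivity
  have hr1 : (q ^ 2)⁻¹ < 1 := by
    rw [inv_lt_one_iff₀]; right; nlinarith
  have hsum : Summable fun n : ℕ => f (n : ℤ) := by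
    simp only [hnat]
    exact (summable_geometric_of_lt_one hr0 hr1).mul_left _
  refine ⟨hsum, ?_⟩
  -- tsum
  have htsum : ∑' n : ℕ, f (n : ℤ) = 1 / (q + 1) := by
    simp only [hnat]
    rw [tsum_mul_left, tsum_geometric_of_lt_one hr0 hr1]
    have h2 : (1:ℝ) - (q ^ 2)⁻¹ ≠ 0 := by
      intro h
      have : (q ^ 2)⁻¹ = 1 := by linarith
      rw [inv_eq_one] at this
      nlinarith
    have h3 : q ^ 2 - 1 ≠ 0 := by nlinarith
    have hq1' : q + 1 ≠ 0 := by positivity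
    have h4 : (1:ℝ) - (q ^ 2)⁻¹ = (q ^ 2 - 1) / q ^ 2 := by
      field_simp
    rw [h4]
    rw [show q ^ 2 - 1 = (q + 1) * (q - 1) by ring]
    field_simp
  -- middle sum
  have hmid : ∀ e ∈ Finset.Icc (-(a : ℤ) - 1) (-1 : ℤ), f e = (q - 1) * y ^ e := by
    intro e he
    rw [Finset.mem_Icc] at he
    rw [hf e (by omega)]
    rw [min_eq_right (by omega : (0:ℤ) ≤ (a : ℤ) + e + 1),
        min_eq_right (by omega : (0:ℤ) ≤ (a : ℤ) + e + 2),
        min_eq_right (by omega : (0:ℤ) ≤ (a : ℤ) + e + 3),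
        min_eq_left (by omega : e + 1 ≤ (0:ℤ)),
        min_eq_left (by omega : e ≤ (0:ℤ))]
    have hcomb : q ^ (2 * (e + 1)) * q ^ (1 - 2 * e) = q ^ (3:ℕ) := by
      rw [← zpow_add₀ hqne, show 2 * (e + 1) + (1 - 2 * e) = ((3:ℕ):ℤ) by push_cast; ring,
          zpow_natCast]
    calc (1 / q) * (q ^ (0:ℤ) - 2 * q ^ ((0:ℤ) - 1) + q ^ ((0:ℤ) - 2))
          * q ^ (2 * (e + 1)) * y ^ e * (q ^ (1 - 2 * e) / (q - 1))
        = (1 / q) * (q ^ (0:ℤ) - 2 * q ^ ((0:ℤ) - 1) + q ^ ((0:ℤ) - 2))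
          * (q ^ (2 * (e + 1)) * q ^ (1 - 2 * e)) * y ^ e / (q - 1) := by ring
      _ = (q - 1) * y ^ e := by
          rw [hcomb, em1, em2, zpow_zero]
          field_simp
          ring
  -- value at -a-2
  have hlow : f (-(a : ℤ) - 2) = -y ^ (-(a : ℤ) - 2) := by
    rw [hf _ le_rfl]
    rw [show (a : ℤ) + (-(a:ℤ) - 2) + 1 = -1 by ring,
        show (a : ℤ) + (-(a:ℤ) - 2) + 2 = 0 by ring,
        show (a : ℤ) + (-(a:ℤ) - 2) + 3 = 1 by ring]
    rw [min_eq_left (by omega : (-1:ℤ) ≤ 0),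
        min_eq_left (le_refl (0:ℤ)),
        min_eq_right (by omega : (0:ℤ) ≤ 1),
        min_eq_left (by omega : (-(a:ℤ) - 2) + 1 ≤ 0),
        min_eq_left (by omega : (-(a:ℤ) - 2) ≤ 0)]
    have hcomb : q ^ (2 * ((-(a:ℤ) - 2) + 1)) * q ^ (1 - 2 * (-(a:ℤ) - 2)) = q ^ (3:ℕ) := by
      rw [← zpow_add₀ hqne, show 2 * ((-(a:ℤ) - 2) + 1) + (1 - 2 * (-(a:ℤ) - 2)) = ((3:ℕ):ℤ)
            by push_cast; ring, zpow_natCast]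
    calc (1 / q) * (q ^ (-1:ℤ) - 2 * q ^ ((0:ℤ) - 1) + q ^ ((0:ℤ) - 2))
          * q ^ (2 * ((-(a:ℤ) - 2) + 1)) * y ^ (-(a:ℤ) - 2)
          * (q ^ (1 - 2 * (-(a:ℤ) - 2)) / (q - 1))
        = (1 / q) * (q ^ (-1:ℤ) - 2 * q ^ ((0:ℤ) - 1) + q ^ ((0:ℤ) - 2))
          * (q ^ (2 * ((-(a:ℤ) - 2) + 1)) * q ^ (1 - 2 * (-(a:ℤ) - 2)))
          * y ^ (-(a:ℤ) - 2) / (q - 1) := by ring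
      _ = -y ^ (-(a:ℤ) - 2) := by
          rw [hcomb, em1, em2, en1]
          field_simp
          ring
  rw [hlow, htsum, Finset.sum_congr rfl hmid, ← Finset.mul_sum]
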